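/- (Lemma 2.9) In the setting of Construction 2.6, the function β ↦ M(β) := M(Y_1(β),...,Y_n(β)) = E(max_{1≤h≤n} Y_h(β)) is convex on [0, β*]. -/

import Mathlib

open MeasureTheory ProbabilityTheory

/-- The σ-algebra generated by `Y 1, ..., Y i`. -/
def priorSigma {Ω : Type*} (Y : ℕ → Ω → ℝ) (i : ℕ) : MeasurableSpace Ω :=
  ⨆ j ∈ Finset.Icc 1 i, MeasurableSpace.comap (Y j) Real.measurableSpace

/-- `τ` is a stopping rule for `Y 1, ..., Y n`: it takes values in `{1, ..., n}` and
each event `{τ = i}` depends only on `Y 1, ..., Y i`. -/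
def IsStopRule {Ω : Type*} (Y : ℕ → Ω → ℝ) (n : ℕ) (τ : Ω → ℕ) : Prop :=
  (∀ ω, τ ω ∈ Finset.Icc 1 n) ∧
  ∀ i ∈ Finset.Icc 1 n, MeasurableSet[priorSigma Y i] {ω | τ ω = i}

/-- `V(Y_1,...,Y_n) = sup_τ E(Y_τ)`: the optimal expected return of the statistician. -/
noncomputable def Vn {Ω : Type*} [MeasurableSpace Ω] (μ : Measure Ω)
    (Y : ℕ → Ω → ℝ) (n : ℕ) : ℝ :=
  sSup {r | ∃ τ, IsStopRule Y n τ ∧ r = ∫ ω, Y (τ ω) ω ∂μ}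

/-- `M(Y_1,...,Y_n) = E(max_{1 ≤ i ≤ n} Y_i)`: the expected return of the prophet. -/
noncomputable def Mn {Ω : Type*} [MeasurableSpace Ω] (μ : Measure Ω)
    (Y : ℕ → Ω → ℝ) (n : ℕ) : ℝ :=
  ∫ ω, sSup ((fun i => Y i ω) '' Set.Icc 1 n) ∂μ

lemma integrable_finset_sup' {Ω : Type*} [MeasurableSpace Ω] (μ : Measure Ω)
    (s : Finset ℕ) (hs : s.Nonempty) (f : ℕ → Ω → ℝ)
    (hf : ∀ i ∈ s, MeasureTheory.Integrable (f i) μ) :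
    MeasureTheory.Integrable (fun ω => s.sup' hs (fun i => f i ω)) μ := by
  revert hf
  induction hs using Finset.Nonempty.cons_induction with
  | singleton a => intro hf; simpa using hf a (by simp)
  | cons a s ha hne ih =>
      intro hf
      have : (fun ω => (Finset.cons a s ha).sup' (Finset.cons_nonempty ha) (fun i => f i ω)) = (fun ω => f a ω ⊔ s.sup' hne (fun i => f i ω)) := by
        funext ω; exact Finset.sup'_cons (f := fun i => f i ω) hne
      rw [this]
      exact (hf a (by simp)).sup (ih (fun i hi => hf i (Finset.mem_cons_of_mem hi)))

set_option linter.unusedVariables false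

theorem stmt17
    {Ω : Type*} [MeasurableSpace Ω] (μ : Measure Ω) [IsProbabilityMeasure μ]
    (n : ℕ) (X : ℕ → Ω → ℝ)
    (hmeas : ∀ i, Measurable (X i))
    (hindep : iIndepFun (fun i : Fin n => X (i.1 + 1)) μ)
    (hident : ∀ i ∈ Set.Icc 1 n, IdentDistrib (X i) (X 1) μ μ)
    (hval : ∀ i ∈ Set.Icc 1 n, ∀ ω, X i ω ∈ Set.Icc (0:ℝ) 1)
    (c : ℝ) (Y : ℕ → Ω → ℝ) (hY : ∀ i ω, Y i ω = X i ω - i * c)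
    (hn : 2 ≤ n) (hc : 0 < c) (hEX : c < ∫ ω, X 1 ω ∂μ)
    (hsupp : μ {ω | X 1 ω ∈ insert (1:ℝ) (insert 0 ((fun i => Vn μ Y i) '' Set.Icc 1 (n-1)))} = 1)
    (h1 : 0 < μ {ω | X 1 ω = 1}) (h0 : 0 < μ {ω | X 1 ω = 0})
    (p c' βstar : ℝ)
    (hp : p = (μ {ω | X 1 ω = 1}).toReal) (hc' : c' = c - p) (hβ : βstar = -p / c')
    (Xb : ℝ → ℕ → Ω → ℝ)
    (hXb : ∀ β h ω, Xb β h ω = if X h ω = 1 then 1 else β * X h ω)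
    (Yb : ℝ → ℕ → Ω → ℝ)
    (hYb : ∀ β h ω, Yb β h ω = Xb β h ω - h * (β * c' + p))
    :
    ConvexOn ℝ (Set.Icc (0:ℝ) βstar) (fun β => Mn μ (Yb β) n) := by

  have hne : (Finset.Icc 1 n).Nonempty := ⟨1, by simp; omega⟩
  -- each Yb β i is integrable for i ∈ Icc 1 n
  have hint : ∀ (β : ℝ) (i : ℕ), i ∈ Finset.Icc 1 n → Integrable (Yb β i) μ := by
    intro β i hi
    have hXi : ∀ ω, X i ω ∈ Set.Icc (0:ℝ) 1 := hval i (by simpa [Set.mem_Icc] using Finset.mem_Icc.mp hi)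
    have hm : Measurable (Yb β i) := by
      have hm1 : Measurable (Xb β i) := by
        have : Xb β i = fun ω => if X i ω = 1 then 1 else β * X i ω := by
          funext ω; exact hXb β i ω
        rw [this]
        exact Measurable.ite ((hmeas i) (measurableSet_singleton 1)) measurable_const
          (measurable_const.mul (hmeas i))
      have : Yb β i = fun ω => Xb β i ω - i * (β * c' + p) := by
        funext ω; exact hYb β i ω
      rw [this]
      exact hm1.sub measurable_const
    refine Integrable.mono' (integrable_const ((1 + |β|) + |(i:ℝ) * (β * c' + p)|))
      hm.aestronglyMeasurable (Filter.Eventually.of_forall fun ω => ?_)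
    rw [hYb β i ω, hXb β i ω]
    have h01 := hXi ω
    rw [Set.mem_Icc] at h01
    have hb : |if X i ω = 1 then (1:ℝ) else β * X i ω| ≤ 1 + |β| := by
      split
      · rw [abs_one]; linarith [abs_nonneg β]
      · rw [abs_mul]
        calc |β| * |X i ω| ≤ |β| * 1 := by
              apply mul_le_mul_of_nonneg_left _ (abs_nonneg β)
              rw [abs_le]; constructor <;> linarith
          _ ≤ 1 + |β| := by linarith
    calc ‖(if X i ω = 1 then (1:ℝ) else β * X i ω) - i * (β * c' + p)‖
        ≤ ‖(if X i ω = 1 then (1:ℝ) else β * X i ω)‖ + ‖(i:ℝ) * (β * c' + p)‖ := norm_sub_le _ _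
      _ ≤ (1 + |β|) + |(i:ℝ) * (β * c' + p)| := by
          rw [Real.norm_eq_abs, Real.norm_eq_abs]; exact add_le_add hb le_rfl
  -- rewrite Mn as integral of a finite sup'
  have hMn : ∀ β : ℝ, Mn μ (Yb β) n =
      ∫ ω, (Finset.Icc 1 n).sup' hne (fun i => Yb β i ω) ∂μ := by
    intro β
    unfold Mn
    congr 1
    funext ω
    rw [Finset.sup'_eq_csSup_image]
    congr 1
    rw [← Finset.coe_Icc]
  -- pointwise affine identity
  have haff : ∀ (β1 β2 t s : ℝ), t + s = 1 → ∀ i ω,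
      Yb (t * β1 + s * β2) i ω = t * Yb β1 i ω + s * Yb β2 i ω := by
    intro β1 β2 t s hts i ω
    rw [hYb, hYb, hYb, hXb, hXb, hXb]
    split
    · ring_nf; linear_combination (-1 + (i:ℝ) * p) * hts
    · ring_nf; linear_combination ((i:ℝ) * p) * hts
  constructor
  · exact convex_Icc 0 βstar
  · intro β1 hβ1 β2 hβ2 t s ht hs hts
    simp only [smul_eq_mul]
    rw [hMn, hMn, hMn]
    have hI1 := integrable_finset_sup' μ _ hne (Yb β1) (fun i hi => hint β1 i hi)
    have hI2 := integrable_finset_sup' μ _ hne (Yb β2) (fun i hi => hint β2 i hi)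
    have hI3 := integrable_finset_sup' μ _ hne (Yb (t * β1 + s * β2))
      (fun i hi => hint _ i hi)
    calc ∫ ω, (Finset.Icc 1 n).sup' hne (fun i => Yb (t * β1 + s * β2) i ω) ∂μ
        ≤ ∫ ω, (t * (Finset.Icc 1 n).sup' hne (fun i => Yb β1 i ω)
            + s * (Finset.Icc 1 n).sup' hne (fun i => Yb β2 i ω)) ∂μ := by
          refine integral_mono hI3 ((hI1.const_mul t).add (hI2.const_mul s)) fun ω => ?_
          refine Finset.sup'_le _ _ fun i hi => ?_
          rw [haff β1 β2 t s hts i ω]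
          have h1 : Yb β1 i ω ≤ (Finset.Icc 1 n).sup' hne (fun i => Yb β1 i ω) :=
            Finset.le_sup' (fun j => Yb β1 j ω) hi
          have h2 : Yb β2 i ω ≤ (Finset.Icc 1 n).sup' hne (fun i => Yb β2 i ω) :=
            Finset.le_sup' (fun j => Yb β2 j ω) hi
          nlinarith
      _ = t * ∫ ω, (Finset.Icc 1 n).sup' hne (fun i => Yb β1 i ω) ∂μ
            + s * ∫ ω, (Finset.Icc 1 n).sup' hne (fun i => Yb β2 i ω) ∂μ := by
          rw [integral_add (hI1.const_mul t) (hI2.const_mul s),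
            integral_const_mul, integral_const_mul]
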